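/- Let T ≥ 0 and let M : [T,∞) → ℝ be continuous such that the improper integral ∫_t^∞ M(s) ds converges for every t ≥ T. Define q₁(t) := M(t), Q_k(t) := −∫_t^∞ q_k(s) ds for k ≥ 1, and q_k(t) := Σ_{j=1}^{k−1} Q_j(t) Q_{k−j}(t) for k ≥ 2, assuming all these improper integrals converge, and set φ(t) := −∫_t^∞ Q₂(s) ds, assumed finite. Suppose that for all t ≥ T one has |∫_t^∞ Q₁(s) ds| ≤ 1 and φ(t) ≤ 6^{−4}. Then for all t ≥ T the series Σ_{k=2}^∞ |Q_k(t)| converges and Σ_{k=2}^∞ |Q_k(t)| ≤ (3/2)|Q₂(t)|. -/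

import Mathlib

open MeasureTheory Filter Topology

lemma catalan_le_four_pow (n : ℕ) : catalan n ≤ 4 ^ n := by
  have h1 : catalan n ≤ n.centralBinom := by
    rw [catalan_eq_centralBinom_div]
    exact Nat.div_le_self _ _
  refine h1.trans ?_
  have h2 : n.centralBinom ≤ 2 ^ (2 * n) := by
    rw [Nat.centralBinom]
    calc (2 * n).choose n ≤ ∑ i ∈ Finset.range (2 * n + 1), (2 * n).choose i :=
          Finset.single_le_sum (fun i _ => Nat.zero_le _) (by simp [Nat.lt_succ_iff]; omega)
      _ = 2 ^ (2 * n) := Nat.sum_range_choose (2 * n)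
  calc n.centralBinom ≤ 2 ^ (2 * n) := h2
    _ = 4 ^ n := by rw [pow_mul]; norm_num

lemma my_cs {μ : Measure ℝ} {f g : ℝ → ℝ}
    (hf : AEStronglyMeasurable f μ) (hg : AEStronglyMeasurable g μ)
    (hf2 : Integrable (fun x => f x ^ 2) μ) (hg2 : Integrable (fun x => g x ^ 2) μ) :
    ∫ x, |f x * g x| ∂μ ≤ Real.sqrt (∫ x, f x ^ 2 ∂μ) * Real.sqrt (∫ x, g x ^ 2 ∂μ) := by
  have hfa : AEStronglyMeasurable (fun x => |f x|) μ := by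
    simpa [Real.norm_eq_abs] using hf.norm
  have hga : AEStronglyMeasurable (fun x => |g x|) μ := by
    simpa [Real.norm_eq_abs] using hg.norm
  have hfm : MemLp (fun x => |f x|) (ENNReal.ofReal 2) μ := by
    rw [show ENNReal.ofReal 2 = 2 by norm_num]
    rw [memLp_two_iff_integrable_sq hfa]
    simpa [sq_abs] using hf2
  have hgm : MemLp (fun x => |g x|) (ENNReal.ofReal 2) μ := by
    rw [show ENNReal.ofReal 2 = 2 by norm_num]
    rw [memLp_two_iff_integrable_sq hga]
    simpa [sq_abs] using hg2
  have hpq : Real.HolderConjugate 2 2 := ⟨by norm_num, by norm_num, by norm_num⟩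
  have key := MeasureTheory.integral_mul_le_Lp_mul_Lq_of_nonneg hpq
    (Filter.Eventually.of_forall (fun x => abs_nonneg (f x)))
    (Filter.Eventually.of_forall (fun x => abs_nonneg (g x))) hfm hgm
  have h2 : ∀ (h : ℝ → ℝ), (∫ x, |h x| ^ (2:ℝ) ∂μ) = ∫ x, h x ^ 2 ∂μ := by
    intro h
    refine integral_congr_ae (Filter.Eventually.of_forall fun x => ?_)
    show |h x| ^ (2:ℝ) = h x ^ 2
    rw [show ((2:ℝ)) = ((2:ℕ):ℝ) by norm_num, Real.rpow_natCast, sq_abs]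
  calc ∫ x, |f x * g x| ∂μ = ∫ x, |f x| * |g x| ∂μ := by simp [abs_mul]
    _ ≤ (∫ x, |f x| ^ (2:ℝ) ∂μ) ^ (1/(2:ℝ)) * (∫ x, |g x| ^ (2:ℝ) ∂μ) ^ (1/(2:ℝ)) := key
    _ = Real.sqrt (∫ x, f x ^ 2 ∂μ) * Real.sqrt (∫ x, g x ^ 2 ∂μ) := by
        rw [h2, h2, ← Real.sqrt_eq_rpow, ← Real.sqrt_eq_rpow]


set_option maxHeartbeats 1000000 in
/-- Estimate (est_sumQk) of Lemma 3.3: if `|∫_t^∞ Q₁| ≤ 1` and `φ(t) ≤ 6⁻⁴` on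
`[T,∞)`, then `Σ_{k=2}^∞ |Q_k(t)|` converges and is at most `(3/2)|Q₂(t)|`. -/
theorem sum_Qk_estimate
    (T : ℝ) (hT : 0 ≤ T)
    (M : ℝ → ℝ) (hMc : ContinuousOn M (Set.Ici T))
    (q Q : ℕ → ℝ → ℝ)
    (hq1 : ∀ t, q 1 t = M t)
    (hqk : ∀ k, 2 ≤ k → ∀ t, q k t = ∑ j ∈ Finset.Ico 1 k, Q j t * Q (k - j) t)
    -- `Q k t = -∫_t^∞ q k`, all these improper integrals being convergent
    (hQ : ∀ k, 1 ≤ k → ∀ t ≥ T,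
      Tendsto (fun R => ∫ s in t..R, q k s) atTop (𝓝 (-(Q k t))))
    -- `φ t = -∫_t^∞ Q₂`, assumed finite
    (φ : ℝ → ℝ)
    (hφ : ∀ t ≥ T,
      Tendsto (fun R => ∫ s in t..R, Q 2 s) atTop (𝓝 (-(φ t))))
    -- `|∫_t^∞ Q₁(s) ds| ≤ 1` for all `t ≥ T`
    (IQ1 : ℝ → ℝ)
    (hIQ1 : ∀ t ≥ T,
      Tendsto (fun R => ∫ s in t..R, Q 1 s) atTop (𝓝 (IQ1 t)))
    (hIQ1bd : ∀ t ≥ T, |IQ1 t| ≤ 1)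
    -- `φ(t) ≤ 6⁻⁴` for all `t ≥ T`
    (hφbd : ∀ t ≥ T, φ t ≤ 1 / 6 ^ 4) :
    ∀ t ≥ T, Summable (fun k : ℕ => |Q (k + 2) t|) ∧
      ∑' k : ℕ, |Q (k + 2) t| ≤ 3 / 2 * |Q 2 t| := by
  -- uIcc's of points ≥ T are inside Ici T
  have hsub : ∀ a b : ℝ, T ≤ a → T ≤ b → Set.uIcc a b ⊆ Set.Ici T := by
    intro a b ha hb x hx
    exact (le_inf ha hb).trans hx.1
  -- q 2 = Q 1 ^ 2
  have hq2 : ∀ s, q 2 s = Q 1 s * Q 1 s := by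
    intro s
    rw [hqk 2 le_rfl, Finset.sum_Ico_eq_sum_range]
    norm_num
  have hq2nn : ∀ s, 0 ≤ q 2 s := fun s => by rw [hq2 s]; exact mul_self_nonneg _
  -- key: fundamental identity for improper integrals
  have key : ∀ g G : ℝ → ℝ, ContinuousOn g (Set.Ici T) →
      (∀ s ≥ T, Tendsto (fun R => ∫ x in s..R, g x) atTop (𝓝 (-(G s)))) →
      ∀ t u, T ≤ t → t ≤ u → G u = G t + ∫ x in t..u, g x := by
    intro g G hgc hg t u ht htu
    have hti : ∀ a b : ℝ, T ≤ a → T ≤ b → IntervalIntegrable g volume a b :=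
      fun a b ha hb => (hgc.mono (hsub a b ha hb)).intervalIntegrable
    have h1 := hg t ht
    have h2 := hg u (ht.trans htu)
    have heq : ∀ᶠ R in atTop, (∫ x in t..u, g x) + (∫ x in u..R, g x) = ∫ x in t..R, g x := by
      filter_upwards [eventually_ge_atTop u] with R hR
      exact intervalIntegral.integral_add_adjacent_intervals
        (hti t u ht (ht.trans htu)) (hti u R (ht.trans htu) ((ht.trans htu).trans hR))
    have h3 : Tendsto (fun R => (∫ x in t..u, g x) + ∫ x in u..R, g x) atTop
        (𝓝 ((∫ x in t..u, g x) + -(G u))) := tendsto_const_nhds.add h2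
    have h4 := h3.congr' heq
    have h5 := tendsto_nhds_unique h4 h1
    linarith
  -- continuity of q k and Q k on [T, ∞)
  have hcont : ∀ k, 1 ≤ k → ContinuousOn (q k) (Set.Ici T) ∧ ContinuousOn (Q k) (Set.Ici T) := by
    intro k
    induction k using Nat.strong_induction_on with
    | _ k ih =>
      intro hk
      have hqc : ContinuousOn (q k) (Set.Ici T) := by
        rcases eq_or_lt_of_le hk with h1 | h2
        · exact hMc.congr (fun s _ => by rw [← h1, hq1])
        · have h2' : 2 ≤ k := h2
          have hcsum : ContinuousOn (fun s => ∑ j ∈ Finset.Ico 1 k, Q j s * Q (k - j) s)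
              (Set.Ici T) := by
            apply continuousOn_finset_sum
            intro j hj
            rw [Finset.mem_Ico] at hj
            exact ((ih j (by omega) (by omega)).2).mul ((ih (k - j) (by omega) (by omega)).2)
          exact hcsum.congr (fun s _ => hqk k h2' s)
      refine ⟨hqc, ?_⟩
      have hid : ∀ s ∈ Set.Ici T, Q k s = Q k T + ∫ x in T..s, q k x :=
        fun s hs => key (q k) (Q k) hqc (hQ k hk) T s le_rfl hs
      have hprim : ContinuousOn (fun s => Q k T + ∫ x in T..s, q k x) (Set.Ici T) := by
        apply continuousOn_const.add
        intro s hs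
        have hs' : T ≤ s := hs
        have hIcc : ContinuousOn (fun u => ∫ x in T..u, q k x) (Set.uIcc T (s + 1)) := by
          apply intervalIntegral.continuousOn_primitive_interval
          rw [Set.uIcc_of_le (by linarith)]
          exact (hqc.mono (fun x hx => hx.1)).integrableOn_Icc
        have hmem : s ∈ Set.uIcc T (s + 1) := by
          rw [Set.uIcc_of_le (by linarith)]
          exact ⟨hs', by linarith⟩
        have hnhds : Set.uIcc T (s + 1) ∈ 𝓝[Set.Ici T] s := by
          rw [Set.uIcc_of_le (by linarith)]
          refine Filter.mem_of_superset
            (Filter.inter_mem self_mem_nhdsWithin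
              (mem_nhdsWithin_of_mem_nhds (Iio_mem_nhds (by linarith : s < s + 1))))
            (fun x hx => ⟨hx.1, le_of_lt hx.2⟩)
        exact (hIcc.continuousWithinAt hmem).mono_of_mem_nhdsWithin hnhds
      exact hprim.congr hid
  have hQcont : ∀ j, 1 ≤ j → ContinuousOn (Q j) (Set.Ici T) := fun j hj => (hcont j hj).2
  have hQ2c : ContinuousOn (Q 2) (Set.Ici T) := hQcont 2 (by norm_num)
  have hq2c : ContinuousOn (q 2) (Set.Ici T) := (hcont 2 (by norm_num)).1
  -- Q2 nonpositivity, monotonicity, φ facts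
  have hQ2id : ∀ t u, T ≤ t → t ≤ u → Q 2 u = Q 2 t + ∫ x in t..u, q 2 x :=
    key _ _ hq2c (hQ 2 (by norm_num))
  have hQ2nonpos : ∀ t, T ≤ t → 0 ≤ -(Q 2 t) := by
    intro t ht
    refine ge_of_tendsto (hQ 2 (by norm_num) t ht) ?_
    filter_upwards [eventually_ge_atTop t] with R hR
    exact intervalIntegral.integral_nonneg hR (fun s _ => hq2nn s)
  have hQ2mono : ∀ t u, T ≤ t → t ≤ u → -(Q 2 u) ≤ -(Q 2 t) := by
    intro t u ht htu
    have h0 : 0 ≤ ∫ x in t..u, q 2 x := intervalIntegral.integral_nonneg htu (fun s _ => hq2nn s)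
    have := hQ2id t u ht htu
    linarith
  have hintQ2nonpos : ∀ t R, T ≤ t → t ≤ R → (∫ x in t..R, Q 2 x) ≤ 0 := by
    intro t R ht htR
    have h0 : 0 ≤ ∫ x in t..R, -(Q 2 x) :=
      intervalIntegral.integral_nonneg htR (fun s hs => hQ2nonpos s (ht.trans hs.1))
    rw [intervalIntegral.integral_neg] at h0
    linarith
  have hφid : ∀ t u, T ≤ t → t ≤ u → φ u = φ t + ∫ x in t..u, Q 2 x := key _ _ hQ2c hφ
  have hφ0 : ∀ t, T ≤ t → 0 ≤ φ t := by
    intro t ht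
    have h1 : -(φ t) ≤ 0 := by
      refine le_of_tendsto (hφ t ht) ?_
      filter_upwards [eventually_ge_atTop t] with R hR
      exact hintQ2nonpos t R ht hR
    linarith
  have hintq2 : ∀ t R, T ≤ t → t ≤ R → (∫ x in t..R, q 2 x) ≤ -(Q 2 t) := by
    intro t R ht htR
    have h1 := hQ2id t R ht htR
    have h2 := hQ2nonpos R (ht.trans htR)
    linarith
  have hintnegQ2 : ∀ t R, T ≤ t → t ≤ R → (∫ x in t..R, -(Q 2 x)) ≤ φ t := by
    intro t R ht htR
    have h1 := hφid t R ht htR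
    have h2 := hφ0 R (ht.trans htR)
    have h3 : (∫ x in t..R, -(Q 2 x)) = -(∫ x in t..R, Q 2 x) := intervalIntegral.integral_neg
    linarith
  -- ψ := sqrt φ
  set ψ : ℝ → ℝ := fun s => Real.sqrt (φ s) with hψdef
  have hψnn : ∀ s, 0 ≤ ψ s := fun s => Real.sqrt_nonneg _
  have hφmono : ∀ t u, T ≤ t → t ≤ u → φ u ≤ φ t := by
    intro t u ht htu
    have := hφid t u ht htu
    have := hintQ2nonpos t u ht htu
    linarith
  have hψmono : ∀ t u, T ≤ t → t ≤ u → ψ u ≤ ψ t :=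
    fun t u ht htu => Real.sqrt_le_sqrt (hφmono t u ht htu)
  have hψsq : ∀ s, T ≤ s → ψ s ^ 2 = φ s := fun s hs => Real.sq_sqrt (hφ0 s hs)
  have hψbd : ∀ s, T ≤ s → ψ s ≤ 1 / 36 := by
    intro s hs
    calc ψ s ≤ Real.sqrt (1 / 6 ^ 4) := Real.sqrt_le_sqrt (hφbd s hs)
      _ = 1 / 36 := by
          rw [show (1 / 6 ^ 4 : ℝ) = (1 / 36) ^ 2 by norm_num, Real.sqrt_sq (by norm_num)]
  -- the Catalan coefficients
  set c : ℕ → ℝ := fun j => (catalan (j - 1) : ℝ) with hcdef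
  have hcnn : ∀ j, 0 ≤ c j := fun j => Nat.cast_nonneg _
  have hcsum : ∀ k, 3 ≤ k → ∑ j ∈ Finset.Ico 1 k, c j * c (k - j) = c k := by
    intro k hk
    have hnat : ∑ j ∈ Finset.Ico 1 k, catalan (j - 1) * catalan (k - j - 1) = catalan (k - 1) := by
      have hcatr : catalan ((k - 2) + 1)
          = ∑ i ∈ Finset.range ((k - 2) + 1), catalan i * catalan ((k - 2) - i) := by
        rw [catalan_succ', Finset.Nat.sum_antidiagonal_eq_sum_range_succ_mk]
      rw [Finset.sum_Ico_eq_sum_range, show k - 1 = (k - 2) + 1 from by omega, hcatr]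
      exact Finset.sum_congr rfl (fun i hi => by congr 1 <;> congr 1 <;> omega)
    calc ∑ j ∈ Finset.Ico 1 k, c j * c (k - j)
        = ((∑ j ∈ Finset.Ico 1 k, catalan (j - 1) * catalan (k - j - 1) : ℕ) : ℝ) := by
          rw [Nat.cast_sum]
          exact Finset.sum_congr rfl (fun j hj => by rw [hcdef]; push_cast; ring)
      _ = c k := by rw [hnat, hcdef]
  -- MAIN INDUCTION
  have main : ∀ k, 2 ≤ k → ∀ t, T ≤ t → |Q k t| ≤ c k * (-(Q 2 t)) * ψ t ^ (k - 2) := by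
    intro k
    induction k using Nat.strong_induction_on with
    | _ k ih =>
      intro hk t ht
      rcases eq_or_lt_of_le hk with h2 | h3
      · rw [← h2, abs_of_nonpos (by linarith [hQ2nonpos t ht])]
        have : c 2 = 1 := by rw [hcdef]; norm_num [catalan_one]
        rw [this]
        simp
      · have h3' : 3 ≤ k := h3
        -- L2 bound for each j < k
        have LII : ∀ j, 1 ≤ j → j < k → ∀ R, t ≤ R →
            (∫ x in t..R, (Q j x) ^ 2) ≤ (c j * ψ t ^ (j - 1)) ^ 2 * (-(Q 2 t)) := by
          intro j hj hjk R htR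
          rcases eq_or_lt_of_le hj with hj1 | hj2
          · have he : (∫ x in t..R, (Q j x) ^ 2) = ∫ x in t..R, q 2 x := by
              apply intervalIntegral.integral_congr
              intro x _
              rw [hq2 x, ← hj1]; ring
            have hc1 : (c j * ψ t ^ (j - 1)) ^ 2 = 1 := by
              rw [← hj1, hcdef]; norm_num [catalan_zero]
            rw [he, hc1, one_mul]
            exact hintq2 t R ht htR
          · have hj2' : 2 ≤ j := hj2
            have hIH := ih j hjk hj2'
            have hpt : ∀ x ∈ Set.Icc t R,
                (Q j x) ^ 2 ≤ (c j ^ 2 * ψ t ^ (2 * (j - 2)) * (-(Q 2 t))) * (-(Q 2 x)) := by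
              intro x hx
              have hTx : T ≤ x := ht.trans hx.1
              have h1 : |Q j x| ≤ c j * (-(Q 2 x)) * ψ x ^ (j - 2) := hIH x hTx
              have h2 : (Q j x) ^ 2 ≤ (c j * (-(Q 2 x)) * ψ x ^ (j - 2)) ^ 2 := by
                rw [← sq_abs]
                exact pow_le_pow_left₀ (abs_nonneg _) h1 2
              refine h2.trans ?_
              have hq2x := hQ2nonpos x hTx
              have hmon := hQ2mono t x ht hx.1
              have hψm := hψmono t x ht hx.1
              have e1 : (c j * (-(Q 2 x)) * ψ x ^ (j - 2)) ^ 2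
                  = c j ^ 2 * ((-(Q 2 x)) * (-(Q 2 x))) * (ψ x ^ (j - 2)) ^ 2 := by ring
              have e2 : (c j ^ 2 * ψ t ^ (2 * (j - 2)) * (-(Q 2 t))) * (-(Q 2 x))
                  = c j ^ 2 * ((-(Q 2 t)) * (-(Q 2 x))) * (ψ t ^ (j - 2)) ^ 2 := by
                rw [mul_comm 2 (j - 2), pow_mul]; ring
              rw [e1, e2]
              have g1 : (-(Q 2 x)) * (-(Q 2 x)) ≤ (-(Q 2 t)) * (-(Q 2 x)) :=
                mul_le_mul_of_nonneg_right hmon hq2x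
              have g2 : (ψ x ^ (j - 2)) ^ 2 ≤ (ψ t ^ (j - 2)) ^ 2 :=
                pow_le_pow_left₀ (pow_nonneg (hψnn x) _)
                  (pow_le_pow_left₀ (hψnn x) hψm _) 2
              exact mul_le_mul (mul_le_mul_of_nonneg_left g1 (sq_nonneg (c j))) g2
                (sq_nonneg _)
                (mul_nonneg (sq_nonneg _) (mul_nonneg (hQ2nonpos t ht) hq2x))
            have hint1 : IntervalIntegrable (fun x => (Q j x) ^ 2) volume t R :=
              (((hQcont j (by omega)).mono (hsub t R ht (ht.trans htR))).pow 2).intervalIntegrable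
            have hint2 : IntervalIntegrable
                (fun x => (c j ^ 2 * ψ t ^ (2 * (j - 2)) * (-(Q 2 t))) * (-(Q 2 x))) volume t R :=
              (continuousOn_const.mul ((hQ2c.mono (hsub t R ht (ht.trans htR))).neg)).intervalIntegrable
            have hmono := intervalIntegral.integral_mono_on htR hint1 hint2 hpt
            rw [intervalIntegral.integral_const_mul] at hmono
            have h5 := hintnegQ2 t R ht htR
            have hconstnn : 0 ≤ c j ^ 2 * ψ t ^ (2 * (j - 2)) * (-(Q 2 t)) :=
              mul_nonneg (mul_nonneg (sq_nonneg _) (pow_nonneg (hψnn t) _)) (hQ2nonpos t ht)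
            calc (∫ x in t..R, (Q j x) ^ 2)
                ≤ (c j ^ 2 * ψ t ^ (2 * (j - 2)) * (-(Q 2 t))) * ∫ x in t..R, -(Q 2 x) := hmono
              _ ≤ (c j ^ 2 * ψ t ^ (2 * (j - 2)) * (-(Q 2 t))) * φ t :=
                  mul_le_mul_of_nonneg_left h5 hconstnn
              _ = (c j * ψ t ^ (j - 1)) ^ 2 * (-(Q 2 t)) := by
                  rw [← hψsq t ht]
                  have hee : 2 * (j - 2) + 2 = (j - 1) * 2 := by omega
                  calc c j ^ 2 * ψ t ^ (2 * (j - 2)) * (-(Q 2 t)) * ψ t ^ 2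
                      = c j ^ 2 * ψ t ^ (2 * (j - 2) + 2) * (-(Q 2 t)) := by rw [pow_add]; ring
                    _ = c j ^ 2 * (ψ t ^ (j - 1)) ^ 2 * (-(Q 2 t)) := by rw [hee, pow_mul]
                    _ = (c j * ψ t ^ (j - 1)) ^ 2 * (-(Q 2 t)) := by ring
        -- Cauchy–Schwarz bound for each term of q k
        have hCS : ∀ j ∈ Finset.Ico 1 k, ∀ R, t ≤ R →
            (∫ x in t..R, |Q j x * Q (k - j) x|)
              ≤ c j * c (k - j) * (-(Q 2 t)) * ψ t ^ (k - 2) := by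
          intro j hj R htR
          rw [Finset.mem_Ico] at hj
          have hj1 : 1 ≤ j := hj.1
          have hjk : j < k := hj.2
          have hm1 : 1 ≤ k - j := by omega
          have hmk : k - j < k := by omega
          have hsubIoc : Set.Ioc t R ⊆ Set.Ici T := fun x hx => ht.trans hx.1.le
          have hsubIcc : Set.Icc t R ⊆ Set.Ici T := fun x hx => ht.trans hx.1
          have hQjm : AEStronglyMeasurable (Q j) (volume.restrict (Set.Ioc t R)) :=
            ((hQcont j hj1).mono hsubIoc).aestronglyMeasurable measurableSet_Ioc
          have hQmm : AEStronglyMeasurable (Q (k - j)) (volume.restrict (Set.Ioc t R)) :=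
            ((hQcont (k - j) hm1).mono hsubIoc).aestronglyMeasurable measurableSet_Ioc
          have hQj2i : Integrable (fun x => (Q j x) ^ 2) (volume.restrict (Set.Ioc t R)) :=
            ((((hQcont j hj1).mono hsubIcc).pow 2).integrableOn_Icc).mono_set Set.Ioc_subset_Icc_self
          have hQm2i : Integrable (fun x => (Q (k - j) x) ^ 2) (volume.restrict (Set.Ioc t R)) :=
            ((((hQcont (k - j) hm1).mono hsubIcc).pow 2).integrableOn_Icc).mono_set
              Set.Ioc_subset_Icc_self
          have hcs := my_cs hQjm hQmm hQj2i hQm2i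
          have b1 := LII j hj1 hjk R htR
          have b2 := LII (k - j) hm1 hmk R htR
          rw [intervalIntegral.integral_of_le htR] at b1 b2 ⊢
          have hn1 : 0 ≤ c j * ψ t ^ (j - 1) := mul_nonneg (hcnn j) (pow_nonneg (hψnn t) _)
          have hn2 : 0 ≤ c (k - j) * ψ t ^ (k - j - 1) :=
            mul_nonneg (hcnn _) (pow_nonneg (hψnn t) _)
          have s1 : Real.sqrt (∫ x in Set.Ioc t R, (Q j x) ^ 2)
              ≤ c j * ψ t ^ (j - 1) * Real.sqrt (-(Q 2 t)) := by
            refine (Real.sqrt_le_sqrt b1).trans ?_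
            rw [Real.sqrt_mul (sq_nonneg _), Real.sqrt_sq hn1]
          have s2 : Real.sqrt (∫ x in Set.Ioc t R, (Q (k - j) x) ^ 2)
              ≤ c (k - j) * ψ t ^ (k - j - 1) * Real.sqrt (-(Q 2 t)) := by
            refine (Real.sqrt_le_sqrt b2).trans ?_
            rw [Real.sqrt_mul (sq_nonneg _), Real.sqrt_sq hn2]
          calc (∫ x in Set.Ioc t R, |Q j x * Q (k - j) x|)
              ≤ Real.sqrt (∫ x in Set.Ioc t R, (Q j x) ^ 2)
                  * Real.sqrt (∫ x in Set.Ioc t R, (Q (k - j) x) ^ 2) := hcs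
            _ ≤ (c j * ψ t ^ (j - 1) * Real.sqrt (-(Q 2 t)))
                  * (c (k - j) * ψ t ^ (k - j - 1) * Real.sqrt (-(Q 2 t))) := by
                apply mul_le_mul s1 s2 (Real.sqrt_nonneg _)
                exact mul_nonneg hn1 (Real.sqrt_nonneg _)
            _ = c j * c (k - j) * (-(Q 2 t)) * ψ t ^ (k - 2) := by
                have e : ψ t ^ (j - 1) * ψ t ^ (k - j - 1) = ψ t ^ (k - 2) := by
                  rw [← pow_add]
                  congr 1
                  omega
                calc (c j * ψ t ^ (j - 1) * Real.sqrt (-(Q 2 t)))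
                      * (c (k - j) * ψ t ^ (k - j - 1) * Real.sqrt (-(Q 2 t)))
                    = c j * c (k - j) * (Real.sqrt (-(Q 2 t)) * Real.sqrt (-(Q 2 t)))
                        * (ψ t ^ (j - 1) * ψ t ^ (k - j - 1)) := by ring
                  _ = c j * c (k - j) * (-(Q 2 t)) * ψ t ^ (k - 2) := by
                      rw [Real.mul_self_sqrt (hQ2nonpos t ht), e]
        -- limit argument
        have hqkc : ContinuousOn (q k) (Set.Ici T) := (hcont k (by omega)).1
        have hbound : ∀ᶠ R in atTop,
            |∫ x in t..R, q k x| ≤ c k * (-(Q 2 t)) * ψ t ^ (k - 2) := by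
          filter_upwards [eventually_ge_atTop t] with R htR
          have hsubU := hsub t R ht (ht.trans htR)
          have hintabs : IntervalIntegrable (fun x => |q k x|) volume t R :=
            ((hqkc.mono hsubU).abs).intervalIntegrable
          have hintterm : ∀ j ∈ Finset.Ico 1 k,
              IntervalIntegrable (fun x => |Q j x * Q (k - j) x|) volume t R := by
            intro j hj
            rw [Finset.mem_Ico] at hj
            exact ((((hQcont j (by omega)).mono hsubU).mul
              ((hQcont (k - j) (by omega)).mono hsubU)).abs).intervalIntegrable
          have hintsum : IntervalIntegrable
              (fun x => ∑ j ∈ Finset.Ico 1 k, |Q j x * Q (k - j) x|) volume t R := by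
            apply ContinuousOn.intervalIntegrable
            apply continuousOn_finset_sum
            intro j hj
            rw [Finset.mem_Ico] at hj
            exact (((hQcont j (by omega)).mono hsubU).mul
              ((hQcont (k - j) (by omega)).mono hsubU)).abs
          have h1 : |∫ x in t..R, q k x| ≤ ∫ x in t..R, |q k x| :=
            intervalIntegral.abs_integral_le_integral_abs htR
          have h2 : (∫ x in t..R, |q k x|)
              ≤ ∫ x in t..R, ∑ j ∈ Finset.Ico 1 k, |Q j x * Q (k - j) x| := by
            apply intervalIntegral.integral_mono_on htR hintabs hintsum
            intro x _
            rw [hqk k (by omega) x]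
            exact Finset.abs_sum_le_sum_abs _ _
          have h3 : (∫ x in t..R, ∑ j ∈ Finset.Ico 1 k, |Q j x * Q (k - j) x|)
              = ∑ j ∈ Finset.Ico 1 k, ∫ x in t..R, |Q j x * Q (k - j) x| :=
            intervalIntegral.integral_finset_sum hintterm
          have h4 : ∑ j ∈ Finset.Ico 1 k, (∫ x in t..R, |Q j x * Q (k - j) x|)
              ≤ ∑ j ∈ Finset.Ico 1 k, c j * c (k - j) * (-(Q 2 t)) * ψ t ^ (k - 2) :=
            Finset.sum_le_sum (fun j hj => hCS j hj R htR)
          have h5 : ∑ j ∈ Finset.Ico 1 k, c j * c (k - j) * (-(Q 2 t)) * ψ t ^ (k - 2)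
              = c k * (-(Q 2 t)) * ψ t ^ (k - 2) := by
            rw [← Finset.sum_mul, ← Finset.sum_mul, hcsum k h3']
          calc |∫ x in t..R, q k x| ≤ ∫ x in t..R, |q k x| := h1
            _ ≤ ∫ x in t..R, ∑ j ∈ Finset.Ico 1 k, |Q j x * Q (k - j) x| := h2
            _ = ∑ j ∈ Finset.Ico 1 k, ∫ x in t..R, |Q j x * Q (k - j) x| := h3
            _ ≤ ∑ j ∈ Finset.Ico 1 k, c j * c (k - j) * (-(Q 2 t)) * ψ t ^ (k - 2) := h4
            _ = c k * (-(Q 2 t)) * ψ t ^ (k - 2) := h5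
        have habs := (hQ k (by omega) t ht).abs
        have := le_of_tendsto habs hbound
        rwa [abs_neg] at this
  -- conclusion
  intro t ht
  have hQ2abs : -(Q 2 t) = |Q 2 t| := (abs_of_nonpos (by linarith [hQ2nonpos t ht])).symm
  have hgeo : ∀ n : ℕ, |Q (n + 2) t| ≤ 4 * |Q 2 t| * (1 / 9) ^ n := by
    intro n
    have h1 := main (n + 2) (by omega) t ht
    have hcat : c (n + 2) ≤ 4 ^ (n + 1) := by
      rw [hcdef]
      calc ((catalan (n + 2 - 1)) : ℝ) = ((catalan (n + 1)) : ℝ) := rfl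
        _ ≤ (((4:ℕ) ^ (n + 1) : ℕ) : ℝ) := by exact_mod_cast catalan_le_four_pow (n + 1)
        _ = 4 ^ (n + 1) := by push_cast; ring
    have hψn : ψ t ^ (n + 2 - 2) ≤ (1 / 36) ^ n := by
      rw [show n + 2 - 2 = n from by omega]
      exact pow_le_pow_left₀ (hψnn t) (hψbd t ht) n
    calc |Q (n + 2) t| ≤ c (n + 2) * (-(Q 2 t)) * ψ t ^ (n + 2 - 2) := h1
      _ ≤ 4 ^ (n + 1) * (-(Q 2 t)) * (1 / 36) ^ n := by
          apply mul_le_mul _ hψn (pow_nonneg (hψnn t) _)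
            (mul_nonneg (by positivity) (hQ2nonpos t ht))
          exact mul_le_mul_of_nonneg_right hcat (hQ2nonpos t ht)
      _ = 4 * (-(Q 2 t)) * (1 / 9) ^ n := by
          rw [pow_succ, show ((1:ℝ)/9)^n = (4:ℝ)^n * (1/36)^n from by rw [← mul_pow]; norm_num]
          ring
      _ = 4 * |Q 2 t| * (1 / 9) ^ n := by rw [hQ2abs]
  have habsnn : ∀ n : ℕ, 0 ≤ |Q (n + 2) t| := fun n => abs_nonneg _
  have hsumgeo : Summable (fun n : ℕ => 4 * |Q 2 t| * (1 / 9) ^ n) :=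
    (summable_geometric_of_lt_one (by norm_num) (by norm_num)).mul_left _
  have hsum : Summable (fun n : ℕ => |Q (n + 2) t|) :=
    Summable.of_nonneg_of_le habsnn hgeo hsumgeo
  refine ⟨hsum, ?_⟩
  rw [Summable.tsum_eq_zero_add hsum]
  have htail : ∑' n : ℕ, |Q (n + 1 + 2) t| ≤ 1 / 2 * |Q 2 t| := by
    have hshift : Summable (fun n : ℕ => |Q (n + 1 + 2) t|) := by
      exact (summable_nat_add_iff 1).2 hsum
    have hgeo' : ∀ n : ℕ, |Q (n + 1 + 2) t| ≤ (4 * |Q 2 t| * (1 / 9)) * (1 / 9) ^ n := by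
      intro n
      calc |Q (n + 1 + 2) t| ≤ 4 * |Q 2 t| * (1 / 9) ^ (n + 1) := hgeo (n + 1)
        _ = (4 * |Q 2 t| * (1 / 9)) * (1 / 9) ^ n := by rw [pow_succ]; ring
    have hsum2 : Summable (fun n : ℕ => (4 * |Q 2 t| * (1 / 9)) * (1 / 9) ^ n) :=
      (summable_geometric_of_lt_one (by norm_num) (by norm_num)).mul_left _
    calc ∑' n : ℕ, |Q (n + 1 + 2) t|
        ≤ ∑' n : ℕ, (4 * |Q 2 t| * (1 / 9)) * (1 / 9) ^ n := Summable.tsum_le_tsum hgeo' hshift hsum2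
      _ = (4 * |Q 2 t| * (1 / 9)) * (1 - 1 / 9)⁻¹ := by
          rw [tsum_mul_left, tsum_geometric_of_lt_one (by norm_num) (by norm_num)]
      _ = 1 / 2 * |Q 2 t| := by ring
  have h0 : |Q (0 + 2) t| = |Q 2 t| := by norm_num
  linarith [htail, h0.le]
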